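/- arXiv:2007.04286 — 4 statements merged into one kernel-verified Lean document; each statement's English description precedes it below -/
import Mathlib

section
/- Let H be a real Hilbert space, let U and P be continuous linear operators on H with P idempotent (P ∘ P = P), and set Q = I - P. Then for every natural number i, P U^{i+1} = \sum_{k=0}^{i} P U^{i-k} (P U) (Q U)^{k}; in particular, P annihilates the orthogonal-dynamics term: P (Q U)^{i+1} = 0. -/
lemma dyson_aux {H : Type*} [NormedAddCommGroup H] [InnerProductSpace ℝ H]
    (U P Q : H →L[ℝ] H) (hQ : Q = 1 - P) (n : ℕ) :
    U ^ (n + 1) =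
      (∑ k ∈ Finset.range (n + 1), U ^ (n - k) * (P * U) * (Q * U) ^ k)
        + (Q * U) ^ (n + 1) := by
  have hPQ : U = P * U + Q * U := by rw [hQ]; noncomm_ring
  induction n with
  | zero => simpa using hPQ
  | succ n ih =>
    have h1 : U ^ (n + 2) = U * U ^ (n + 1) := pow_succ' U (n + 1)
    rw [h1, ih, mul_add, Finset.mul_sum]
    have h2 : U * (Q * U) ^ (n + 1)
        = P * U * (Q * U) ^ (n + 1) + (Q * U) ^ (n + 2) := by
      calc U * (Q * U) ^ (n + 1) = (P * U + Q * U) * (Q * U) ^ (n + 1) := by rw [← hPQ]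
        _ = P * U * (Q * U) ^ (n + 1) + (Q * U) ^ (n + 2) := by
            rw [add_mul, ← pow_succ']
    have h3 : ∀ k ∈ Finset.range (n + 1),
        U * (U ^ (n - k) * (P * U) * (Q * U) ^ k)
          = U ^ (n + 1 - k) * (P * U) * (Q * U) ^ k := by
      intro k hk
      have hk' : k ≤ n := Nat.lt_succ_iff.mp (Finset.mem_range.mp hk)
      have hnk : n + 1 - k = (n - k) + 1 := by omega
      rw [hnk, pow_succ']
      noncomm_ring
    rw [Finset.sum_congr rfl h3, h2, Finset.sum_range_succ (n := n + 1)]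
    have h4 : n + 1 - (n + 1) = 0 := by omega
    rw [h4, pow_zero, one_mul]
    abel

/-- **Projected Mori–Zwanzig (Dyson) decomposition.** For continuous linear operators
`U` and `P` on a real Hilbert space `H`, with `P` idempotent and `Q = I - P`, one has
for every natural number `i`:
`P U^(i+1) = ∑_{k=0}^{i} P U^(i-k) (P U) (Q U)^k`, and in particular
`P (Q U)^(i+1) = 0`. -/
theorem projected_dyson_formula
    {H : Type*} [NormedAddCommGroup H] [InnerProductSpace ℝ H] [CompleteSpace H]
    (U P : H →L[ℝ] H) (hP : P * P = P) (Q : H →L[ℝ] H) (hQ : Q = 1 - P) (i : ℕ) :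
    P * U ^ (i + 1) =
      ∑ k ∈ Finset.range (i + 1), P * (U ^ (i - k) * (P * U) * (Q * U) ^ k)
    ∧ P * (Q * U) ^ (i + 1) = 0 := by
  have hPQ : P * Q = 0 := by rw [hQ, mul_sub, mul_one, hP, sub_self]
  have h2 : P * (Q * U) ^ (i + 1) = 0 := by
    rw [pow_succ', ← mul_assoc, ← mul_assoc, hPQ, zero_mul, zero_mul]
  refine ⟨?_, h2⟩
  rw [dyson_aux U P Q hQ i, mul_add, h2, add_zero, Finset.mul_sum]
end

section
/- Let (Ω, ℱ, μ) be a probability space and Φ : Ω → Ω a measurable, measure-preserving map, so that the Koopman operator U : L²(μ) → L²(μ), defined by U f = f ∘ Φ, is a well-defined linear isometry. Let P be the orthogonal projection of L²(μ) onto a closed subspace S, and Q = I - P. Then for every X ∈ L²(μ) and every natural number i, the discrete Mori–Zwanzig equation U^{i+1} X = \sum_{k=0}^{i} U^{i-k} (P U) (Q U)^{k} X + (Q U)^{i+1} X holds in L²(μ). -/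
open MeasureTheory

/-- **Discrete Mori–Zwanzig equation.** Let `(Ω, ℱ, μ)` be a probability space,
`Φ : Ω → Ω` a measurable measure-preserving map, and `U` the Koopman operator on
`L²(μ)`, `U f = f ∘ Φ`. Let `P` be the orthogonal projection of `L²(μ)` onto a
closed subspace `S` and `Q = I - P`. Then for every `X ∈ L²(μ)` and every `i ∈ ℕ`,
`U^(i+1) X = ∑_{k=0}^{i} U^(i-k) (P U) (Q U)^k X + (Q U)^(i+1) X` in `L²(μ)`. -/
theorem discrete_mori_zwanzig
    {Ω : Type*} [MeasurableSpace Ω] (μ : Measure Ω) [IsProbabilityMeasure μ]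
    (Φ : Ω → Ω) (hΦ : MeasurePreserving Φ μ μ)
    (U : Lp ℝ 2 μ →L[ℝ] Lp ℝ 2 μ)
    (hU : ∀ f : Lp ℝ 2 μ, (U f : Ω → ℝ) =ᵐ[μ] fun ω => f (Φ ω))
    (S : Submodule ℝ (Lp ℝ 2 μ)) [S.HasOrthogonalProjection]
    (P Q : Lp ℝ 2 μ →L[ℝ] Lp ℝ 2 μ)
    (hP : P = S.subtypeL.comp S.orthogonalProjectionOnto) (hQ : Q = 1 - P)
    (X : Lp ℝ 2 μ) (i : ℕ) :
    (U ^ (i + 1)) X =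
      (∑ k ∈ Finset.range (i + 1), (U ^ (i - k) * (P * U) * (Q * U) ^ k) X)
        + ((Q * U) ^ (i + 1)) X := by
  have hPQ : P * U + Q * U = U := by
    rw [hQ]; noncomm_ring
  have key : ∀ n : ℕ, U ^ (n + 1) =
      (∑ k ∈ Finset.range (n + 1), U ^ (n - k) * (P * U) * (Q * U) ^ k)
        + (Q * U) ^ (n + 1) := by
    intro n
    induction n with
    | zero =>
      rw [pow_one, pow_one, Finset.sum_range_one, Nat.sub_zero, pow_zero, pow_zero,
        one_mul, mul_one, hPQ]
    | succ n ih =>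
      have h1 : U ^ (n + 2) = U * U ^ (n + 1) := by rw [pow_succ']
      rw [h1, ih, mul_add, Finset.mul_sum]
      have h2 : ∀ k ∈ Finset.range (n + 1),
          U * (U ^ (n - k) * (P * U) * (Q * U) ^ k)
            = U ^ (n + 1 - k) * (P * U) * (Q * U) ^ k := by
        intro k hk
        rw [Finset.mem_range] at hk
        have : n + 1 - k = (n - k) + 1 := by omega
        rw [this, pow_succ']
        noncomm_ring
      have h3 : U * (Q * U) ^ (n + 1)
          = (P * U) * (Q * U) ^ (n + 1) + (Q * U) ^ (n + 2) := by
        rw [pow_succ' (Q * U) (n + 1), ← add_mul, hPQ]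
      rw [Finset.sum_congr rfl h2, h3]
      conv_rhs => rw [Finset.sum_range_succ]
      rw [show n + 1 - (n + 1) = 0 from by omega, pow_zero, one_mul]
      abel
  rw [key i]
  simp
end

section
/- Let H and 𝓗 be real Hilbert spaces, K : H → 𝓗 a bounded linear operator with adjoint K*, (φ_j)_{j∈ℕ} an orthonormal family in H, and (λ_j)_{j∈ℕ} strictly positive real numbers with K* K φ_j = λ_j φ_j for every j. Let (c_j)_{j∈ℕ} be real numbers with \sum_j c_j² / λ_j < ∞. Then the series f = \sum_j c_j φ_j converges in H, the series 𝒩 f = \sum_j (c_j / λ_j) K φ_j converges in 𝓗, and K* applied to 𝒩 f recovers f: K* (\sum_j (c_j / λ_j) K φ_j) = \sum_j c_j φ_j. That is, K* is a left inverse of the Nyström operator 𝒩 on its domain. -/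
open ContinuousLinearMap RealInnerProductSpace

lemma ortho_summable {E : Type*} [NormedAddCommGroup E] [InnerProductSpace ℝ E]
    [CompleteSpace E] {v : ℕ → E} (hv : Orthonormal ℝ v) {a : ℕ → ℝ}
    (ha : Summable fun j => a j ^ 2) : Summable fun j => a j • v j := by
  rw [summable_iff_vanishing] at ha ⊢
  intro U hU
  obtain ⟨ε, hε, hball⟩ := Metric.mem_nhds_iff.mp hU
  obtain ⟨s, hs⟩ := ha (Metric.ball 0 (ε ^ 2))
    (Metric.ball_mem_nhds _ (by positivity))
  refine ⟨s, fun t ht => hball ?_⟩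
  have h1 := hs t ht
  rw [Metric.mem_ball, dist_zero_right, Real.norm_eq_abs,
    abs_of_nonneg (Finset.sum_nonneg fun i _ => sq_nonneg _)] at h1
  rw [Metric.mem_ball, dist_zero_right]
  have h2 : ‖∑ i ∈ t, a i • v i‖ ^ 2 = ∑ i ∈ t, a i ^ 2 := by
    rw [← real_inner_self_eq_norm_sq]
    have := hv.inner_sum a a t
    simpa [sq] using this
  nlinarith [norm_nonneg (∑ i ∈ t, a i • v i), sq_nonneg ε]

/-- Let `K : H → 𝓗` be a bounded linear operator between real Hilbert spaces with
adjoint `K*`, `(φ_j)` an orthonormal family in `H`, and `(λ_j)` strictly positive reals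
with `K* K φ_j = λ_j φ_j`. If `∑_j c_j²/λ_j < ∞`, then `f = ∑_j c_j φ_j` converges in
`H`, `𝒩 f = ∑_j (c_j/λ_j) K φ_j` converges in `𝓗`, and `K* (𝒩 f) = f`: the adjoint
`K*` is a left inverse of the Nyström operator on its domain. -/
theorem adjoint_left_inverse_nystrom
    {H 𝓗 : Type*} [NormedAddCommGroup H] [InnerProductSpace ℝ H] [CompleteSpace H]
    [NormedAddCommGroup 𝓗] [InnerProductSpace ℝ 𝓗] [CompleteSpace 𝓗]
    (K : H →L[ℝ] 𝓗) (φ : ℕ → H) (hφ : Orthonormal ℝ φ)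
    (lam : ℕ → ℝ) (hlam : ∀ j, 0 < lam j)
    (heig : ∀ j, (adjoint K) (K (φ j)) = lam j • φ j)
    (c : ℕ → ℝ) (hc : Summable fun j => c j ^ 2 / lam j) :
    (Summable fun j => c j • φ j) ∧
    (Summable fun j => (c j / lam j) • K (φ j)) ∧
    (adjoint K) (∑' j, (c j / lam j) • K (φ j)) = ∑' j, c j • φ j := by
  -- inner products of images
  have hKinner : ∀ i j, ⟪K (φ i), K (φ j)⟫ = if i = j then lam j else 0 := by
    intro i j
    rw [← adjoint_inner_right, heig j, real_inner_smul_right]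
    rcases eq_or_ne i j with rfl | h
    · simp [orthonormal_iff_ite.mp hφ i i, hφ.1 i]
    · simp [orthonormal_iff_ite.mp hφ i j, h]
  -- λ_j ≤ ‖K‖²
  have hlamle : ∀ j, lam j ≤ ‖K‖ ^ 2 := by
    intro j
    have h1 : lam j = ‖K (φ j)‖ ^ 2 := by
      rw [← real_inner_self_eq_norm_sq, hKinner j j]; simp
    have h2 : ‖K (φ j)‖ ≤ ‖K‖ * ‖φ j‖ := K.le_opNorm _
    rw [hφ.1 j, mul_one] at h2
    nlinarith [norm_nonneg (K (φ j)), norm_nonneg K]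
  -- the normalized family ψ
  set ψ : ℕ → 𝓗 := fun j => (Real.sqrt (lam j))⁻¹ • K (φ j) with hψ
  have hψon : Orthonormal ℝ ψ := by
    rw [orthonormal_iff_ite]
    intro i j
    simp only [hψ, real_inner_smul_left, real_inner_smul_right, hKinner]
    rcases eq_or_ne i j with rfl | h
    · have h0 : (0:ℝ) < Real.sqrt (lam i) := Real.sqrt_pos.mpr (hlam i)
      have hmul := Real.mul_self_sqrt (hlam i).le
      simp only [if_pos rfl]
      field_simp
      simp [Real.sq_sqrt (hlam i).le]
    · simp [h]
  -- first summability
  have hc2 : Summable fun j => c j ^ 2 := by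
    refine Summable.of_nonneg_of_le (fun j => sq_nonneg _) (fun j => ?_)
      (hc.mul_right (‖K‖ ^ 2))
    calc c j ^ 2 = c j ^ 2 / lam j * lam j := (div_mul_cancel₀ _ (hlam j).ne').symm
      _ ≤ c j ^ 2 / lam j * ‖K‖ ^ 2 :=
          mul_le_mul_of_nonneg_left (hlamle j) (div_nonneg (sq_nonneg _) (hlam j).le)
  have hs1 : Summable fun j => c j • φ j := ortho_summable hφ hc2
  -- second summability
  have hrw : ∀ j, (c j / lam j) • K (φ j) = (c j / Real.sqrt (lam j)) • ψ j := by
    intro j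
    have hmul := Real.mul_self_sqrt (hlam j).le
    have h0 : Real.sqrt (lam j) ≠ 0 := ne_of_gt (Real.sqrt_pos.mpr (hlam j))
    simp only [hψ, smul_smul]
    congr 1
    field_simp [(hlam j).ne']
    rw [Real.sq_sqrt (hlam j).le]
  have hsum2 : Summable fun j => (c j / Real.sqrt (lam j)) ^ 2 := by
    convert hc using 2 with j
    rw [div_pow, Real.sq_sqrt (hlam j).le]
  have hs2 : Summable fun j => (c j / lam j) • K (φ j) := by
    simp_rw [hrw]; exact ortho_summable hψon hsum2
  refine ⟨hs1, hs2, ?_⟩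
  rw [(adjoint K).map_tsum hs2]
  congr 1
  ext j
  rw [map_smul, heig j, smul_smul, div_mul_cancel₀ _ (hlam j).ne']
end

section
/- Let Ω be a measurable space, Φ : Ω → Ω a measurable map, X : Ω → ℝⁿ a (Borel) measurable observable, and m ≥ 1. Define the delay-coordinate map 𝕏_m : Ω → (ℝⁿ)^m by 𝕏_m(ω) = (X(ω), X(Φ(ω)), …, X(Φ^{m−1}(ω))). If 𝕏_m is a measurable embedding (injective, measurable, mapping measurable sets to measurable sets), then there exists a Borel measurable function M_0 : (ℝⁿ)^m → ℝⁿ such that X(Φ^m(ω)) = M_0(𝕏_m(ω)) for every ω ∈ Ω. Consequently, the time series x_i := X(Φ^i(ω)) satisfies the Markovian closure x_{i+m} = M_0(x_i, x_{i+1}, …, x_{i+m−1}) for all i ≥ 0 and all ω ∈ Ω. -/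
/-- **Markovian closure under delay embedding.** Let `Φ : Ω → Ω` be measurable,
`X : Ω → ℝⁿ` a measurable observable, and `m ≥ 1`. Define the delay-coordinate map
`𝕏_m(ω) = (X(ω), X(Φω), …, X(Φ^{m−1}ω))`. If `𝕏_m` is a measurable embedding, then
there is a Borel measurable `M₀ : (ℝⁿ)^m → ℝⁿ` with `X(Φ^m ω) = M₀(𝕏_m ω)` for all
`ω`; consequently the time series `x_i = X(Φ^i ω)` satisfies the Markovian closure
`x_{i+m} = M₀(x_i, …, x_{i+m−1})` for all `i` and all `ω`. -/
theorem delay_embedding_markovian_closure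
    {Ω : Type*} [MeasurableSpace Ω] (n : ℕ)
    (Φ : Ω → Ω) (hΦ : Measurable Φ)
    (X : Ω → (Fin n → ℝ)) (hX : Measurable X)
    (m : ℕ) (hm : 1 ≤ m)
    (DX : Ω → Fin m → (Fin n → ℝ)) (hDX : DX = fun ω (i : Fin m) => X (Φ^[(i : ℕ)] ω))
    (hemb : MeasurableEmbedding DX) :
    ∃ M₀ : (Fin m → (Fin n → ℝ)) → (Fin n → ℝ), Measurable M₀ ∧
      (∀ ω, X (Φ^[m] ω) = M₀ (DX ω)) ∧
      (∀ (ω : Ω) (i : ℕ), X (Φ^[i + m] ω) = M₀ (fun k => X (Φ^[i + (k : ℕ)] ω))) := by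
  have hg : Measurable fun ω => X (Φ^[m] ω) := hX.comp (hΦ.iterate m)
  obtain ⟨M₀, hM₀, hext⟩ := hemb.exists_measurable_extend hg
    (fun _ => ⟨fun _ => 0⟩)
  refine ⟨M₀, hM₀, fun ω => (congrFun hext ω).symm, fun ω i => ?_⟩
  have h1 : X (Φ^[i + m] ω) = M₀ (DX (Φ^[i] ω)) := by
    rw [add_comm, Function.iterate_add_apply]
    exact (congrFun hext (Φ^[i] ω)).symm
  rw [h1, hDX]
  have harg : (fun (k : Fin m) => X (Φ^[(k : ℕ)] (Φ^[i] ω)))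
      = fun (k : Fin m) => X (Φ^[i + (k : ℕ)] ω) := by
    funext k
    rw [← Function.iterate_add_apply, add_comm]
  exact congrArg M₀ harg
end
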